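/- Let I be a countable index set, (V_i)_{i∈I} complex Hilbert spaces, and V = ⊕_{i∈I} V_i their Hilbert direct sum. Let a_{ij} : V_j × V_i → ℂ (i,j ∈ I) be sesquilinear mappings and M_{ij} ≥ 0 constants such that |a_{ij}(ψ,ψ')| ≤ M_{ij}·‖ψ‖_{V_j}·‖ψ'‖_{V_i} for all ψ ∈ V_j, ψ' ∈ V_i. If the matrix (M_{ij})_{i,j∈I} defines a bounded linear operator M on ℓ²(I), then for all ψ, ψ' ∈ V the double series a(ψ,ψ') := ∑_{i,j∈I} a_{ij}(ψ_j, ψ'_i) converges absolutely, and the resulting sesquilinear form a on V is continuous with constant ‖M‖, i.e. |a(ψ,ψ')| ≤ ‖M‖·‖ψ‖_V·‖ψ'‖_V for all ψ, ψ' ∈ V. -/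

import Mathlib

open scoped RealInnerProductSpace

/-- The family of norms of an `lp V 2` element, as an element of real `ℓ²`. -/
noncomputable def lpNorms {I : Type*} {V : I → Type*} [∀ i, NormedAddCommGroup (V i)]
    (ψ : lp V 2) : lp (fun _ : I => ℝ) 2 :=
  ⟨fun j => ‖ψ j‖, by
    apply memℓp_gen
    have h := (memℓp_gen_iff (p := 2) (by norm_num) (f := fun j => ψ j)).mp (lp.memℓp ψ)
    simpa [Real.norm_eq_abs, abs_norm] using h⟩

theorem lpNorms_norm {I : Type*} {V : I → Type*} [∀ i, NormedAddCommGroup (V i)]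
    (ψ : lp V 2) : ‖lpNorms ψ‖ = ‖ψ‖ := by
  rw [lp.norm_eq_tsum_rpow (by norm_num) (lpNorms ψ), lp.norm_eq_tsum_rpow (by norm_num) ψ]
  congr 1
  refine tsum_congr fun j => ?_
  simp [lpNorms, Real.norm_eq_abs, abs_norm]


/-- Let `I` be a countable index set, `(V i)` complex Hilbert spaces and
`lp V 2` their Hilbert direct sum.  Let `a i j : V j × V i → ℂ` be sesquilinear mappings
(bundled as linear-in-the-first, conjugate-linear-in-the-second maps) with
`‖a i j ψ ψ'‖ ≤ M i j * ‖ψ‖ * ‖ψ'‖` for nonnegative constants `M i j`.  If the matrix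
`(M i j)` defines a bounded linear operator `T` on `ℓ²(I)` (i.e. for every `x ∈ ℓ²(I)` the
`i`-th row sum `∑ j, M i j * x j` converges to `(T x) i`), then for all `ψ ψ'` in the direct
sum the double series `∑_{i,j} a i j (ψ j) (ψ' i)` converges absolutely and the resulting
sesquilinear form is continuous with constant `‖T‖`. -/
theorem stmt0 {I : Type*} [Countable I]
    {V : I → Type*} [∀ i, NormedAddCommGroup (V i)] [∀ i, InnerProductSpace ℂ (V i)]
    [∀ i, CompleteSpace (V i)]
    (a : ∀ i j, V j →ₗ[ℂ] V i →ₗ⋆[ℂ] ℂ)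
    (M : I → I → ℝ) (hMnonneg : ∀ i j, 0 ≤ M i j)
    (hbound : ∀ i j (ψ : V j) (ψ' : V i), ‖a i j ψ ψ'‖ ≤ M i j * ‖ψ‖ * ‖ψ'‖)
    (T : lp (fun _ : I => ℝ) 2 →L[ℝ] lp (fun _ : I => ℝ) 2)
    (hT : ∀ (x : lp (fun _ : I => ℝ) 2) (i : I), HasSum (fun j => M i j * x j) (T x i)) :
    ∀ ψ ψ' : lp V 2,
      Summable (fun p : I × I => ‖a p.1 p.2 (ψ p.2) (ψ' p.1)‖) ∧
      ‖∑' p : I × I, a p.1 p.2 (ψ p.2) (ψ' p.1)‖ ≤ ‖T‖ * ‖ψ‖ * ‖ψ'‖ := by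
  intro ψ ψ'
  set x := lpNorms ψ with hx
  set x' := lpNorms ψ' with hx'
  have hxj : ∀ j, x j = ‖ψ j‖ := fun j => rfl
  have hx'i : ∀ i, x' i = ‖ψ' i‖ := fun i => rfl
  -- the dominating nonnegative double family
  set f : I × I → ℝ := fun p => M p.1 p.2 * ‖ψ p.2‖ * ‖ψ' p.1‖ with hf
  have hrow : ∀ i, HasSum (fun j => f (i, j)) (T x i * ‖ψ' i‖) := by
    intro i
    have := (hT x i).mul_right (‖ψ' i‖)
    simpa [hf, hxj, mul_assoc, mul_comm, mul_left_comm] using this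
  have hinner : HasSum (fun i => T x i * ‖ψ' i‖) (inner ℝ (T x) x' : ℝ) := by
    have := lp.hasSum_inner (𝕜 := ℝ) (T x) x'
    simpa [RCLike.inner_apply, starRingEnd_apply, star_trivial, hx'i, mul_comm] using this
  have hfsum : Summable f := by
    refine (summable_prod_of_nonneg ?_).mpr ⟨fun i => (hrow i).summable, ?_⟩
    · intro p
      exact mul_nonneg (mul_nonneg (hMnonneg _ _) (norm_nonneg _)) (norm_nonneg _)
    · have : (fun i => ∑' j, f (i, j)) = fun i => T x i * ‖ψ' i‖ := by
        funext i; exact (hrow i).tsum_eq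
      rw [this]
      exact hinner.summable
  have hdom : ∀ p : I × I, ‖a p.1 p.2 (ψ p.2) (ψ' p.1)‖ ≤ f p := fun p => hbound _ _ _ _
  have hsum1 : Summable (fun p : I × I => ‖a p.1 p.2 (ψ p.2) (ψ' p.1)‖) :=
    hfsum.of_nonneg_of_le (fun p => norm_nonneg _) hdom
  refine ⟨hsum1, ?_⟩
  have hle1 : ‖∑' p : I × I, a p.1 p.2 (ψ p.2) (ψ' p.1)‖ ≤ ∑' p, f p := by
    refine le_trans (norm_tsum_le_tsum_norm hsum1) ?_
    exact Summable.tsum_le_tsum hdom hsum1 hfsum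
  have htsumf : ∑' p, f p = (inner ℝ (T x) x' : ℝ) := by
    rw [← hinner.tsum_eq]
    rw [Summable.tsum_prod' hfsum fun i => (hrow i).summable]
    exact tsum_congr fun i => (hrow i).tsum_eq
  have hCS : (inner ℝ (T x) x' : ℝ) ≤ ‖T‖ * ‖ψ‖ * ‖ψ'‖ := by
    calc (inner ℝ (T x) x' : ℝ) ≤ ‖T x‖ * ‖x'‖ := real_inner_le_norm _ _
      _ ≤ (‖T‖ * ‖x‖) * ‖x'‖ := by
          exact mul_le_mul_of_nonneg_right (T.le_opNorm x) (norm_nonneg _)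
      _ = ‖T‖ * ‖ψ‖ * ‖ψ'‖ := by rw [lpNorms_norm, lpNorms_norm, mul_assoc]
  linarith [hle1, htsumf ▸ hle1]
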